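/- Let G = (V, E_1, …, E_k) be a multilayer graph, W its combined weighted wedge graph, and C a vertex cover of W. Define S_i = E_i ∖ { e ∈ E_i : n_e ∈ C } for each i ∈ [k]. Then each S_i fulfills the STC for E_i, d_k(S_1,…,S_k) = 0, and Σ_{i∈[k]} |E_i∖S_i| = Σ_{n_e ∈ C} w(n_e). -/

import Mathlib

open Finset

/-- A wedge `(v, {u, w})` of an edge set `E`. -/
def IsWedge {V : Type*} (E : Finset (Sym2 V)) (v u w : V) : Prop :=
  u ≠ v ∧ v ≠ w ∧ u ≠ w ∧ s(u, v) ∈ E ∧ s(v, w) ∈ E ∧ s(u, w) ∉ E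

/-- A labeling `S ⊆ E` fulfills the strong triadic closure for `E`. -/
def FulfillsSTC {V : Type*} (E S : Finset (Sym2 V)) : Prop :=
  ∀ u v w : V, u ≠ v → v ≠ w → u ≠ w → s(u, v) ∈ S → s(v, w) ∈ S → s(u, w) ∈ E

/-- `s(e)`: the number of layers in which `e` is labeled strong. -/
def sCount {V : Type*} [DecidableEq V] {k : ℕ} (Ss : Fin k → Finset (Sym2 V))
    (e : Sym2 V) : ℕ :=
  (Finset.univ.filter fun i => e ∈ Ss i).card

/-- `w(e)`: the number of layers in which `e` is labeled weak. -/
def wCount {V : Type*} [DecidableEq V] {k : ℕ} (Es Ss : Fin k → Finset (Sym2 V))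
    (e : Sym2 V) : ℕ :=
  (Finset.univ.filter fun i => e ∈ Es i ∧ e ∉ Ss i).card

/-- `d_k(S_1, …, S_k) = ∑_{e ∈ E, w(e) > 0} s(e)`: the number of disagreements. -/
def disagree {V : Type*} [DecidableEq V] {k : ℕ} (Es Ss : Fin k → Finset (Sym2 V)) : ℕ :=
  ∑ e ∈ (Finset.univ.biUnion Es).filter (fun e => 0 < wCount Es Ss e), sCount Ss e

/-- `C` (a set of vertices `n_e`, identified with the corresponding edges `e`) is a
vertex cover of the combined wedge graph `W` of the multilayer graph: in `W`,
`n_{uv}` and `n_{vw}` are adjacent iff `(v,{u,w})` is a wedge of some layer `E_i`,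
and a vertex cover contains at least one endpoint of every edge. -/
def IsCombinedWedgeGraphVC {V : Type*} {k : ℕ} (Es : Fin k → Finset (Sym2 V))
    (C : Finset (Sym2 V)) : Prop :=
  ∀ i : Fin k, ∀ v u w : V, IsWedge (Es i) v u w → s(u, v) ∈ C ∨ s(v, w) ∈ C

/-- The weight `w(n_e) = |{i ∈ [k] : e ∈ E_i}|` of the vertex `n_e` of the combined
weighted wedge graph. -/
def wedgeWeight {V : Type*} [DecidableEq V] {k : ℕ} (Es : Fin k → Finset (Sym2 V))
    (e : Sym2 V) : ℕ :=
  (Finset.univ.filter fun i => e ∈ Es i).card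

/-- From a vertex cover `C` of the combined weighted wedge graph, the labelings
`S_i = E_i ∖ {e ∈ E_i : n_e ∈ C}` fulfill the STC in every layer, have no
disagreements, and `∑_i |E_i ∖ S_i|` equals the weight of `C`. -/
theorem vc_gives_consistent_stc {V : Type*} [DecidableEq V] {k : ℕ}
    (Es : Fin k → Finset (Sym2 V)) (C : Finset (Sym2 V))
    (hCsub : C ⊆ Finset.univ.biUnion Es) (hC : IsCombinedWedgeGraphVC Es C) :
    let Ss : Fin k → Finset (Sym2 V) := fun i => Es i \ (Es i).filter (fun e => e ∈ C)
    (∀ i, FulfillsSTC (Es i) (Ss i)) ∧ disagree Es Ss = 0 ∧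
      (∑ i : Fin k, (Es i \ Ss i).card) = ∑ e ∈ C, wedgeWeight Es e := by
  intro Ss
  have hmem : ∀ i e, e ∈ Ss i ↔ e ∈ Es i ∧ e ∉ C := by
    intro i e
    simp only [Ss, Finset.mem_sdiff, Finset.mem_filter]
    tauto
  refine ⟨?_, ?_, ?_⟩
  · intro i u v w huv hvw huw h1 h2
    by_contra h
    have hw : IsWedge (Es i) v u w :=
      ⟨huv, hvw, huw, ((hmem i _).1 h1).1, ((hmem i _).1 h2).1, h⟩
    rcases hC i v u w hw with hc | hc
    · exact ((hmem i _).1 h1).2 hc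
    · exact ((hmem i _).1 h2).2 hc
  · apply Finset.sum_eq_zero
    intro e he
    rw [Finset.mem_filter] at he
    obtain ⟨heE, hw⟩ := he
    rw [wCount, Finset.card_pos] at hw
    obtain ⟨i, hi⟩ := hw
    rw [Finset.mem_filter] at hi
    have heC : e ∈ C := by
      by_contra hnc
      exact hi.2.2 ((hmem i e).2 ⟨hi.2.1, hnc⟩)
    rw [sCount, Finset.card_eq_zero]
    apply Finset.filter_false_of_mem
    intro j _ hj
    exact ((hmem j e).1 hj).2 heC
  · have hsd : ∀ i, Es i \ Ss i = (Es i).filter (fun e => e ∈ C) := by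
      intro i
      ext e
      simp only [Finset.mem_sdiff, Finset.mem_filter, hmem i e]
      tauto
    simp_rw [hsd, wedgeWeight]
    have step : ∀ i : Fin k, ((Es i).filter (fun e => e ∈ C)).card
        = (C.filter (fun e => e ∈ Es i)).card := by
      intro i
      rw [Finset.filter_mem_eq_inter, Finset.filter_mem_eq_inter, Finset.inter_comm]
    simp_rw [step, Finset.card_filter]
    rw [Finset.sum_comm]
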